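/- The group Sp(4,𝔽₂) is isomorphic to the symmetric group S₆. -/

import Mathlib

open Matrix

/-- The symplectic form matrix on `(𝔽₂)⁴`. -/
def J8 : Matrix (Fin 4) (Fin 4) (ZMod 2) :=
  !![0, 1, 0, 0; 1, 0, 0, 0; 0, 0, 0, 1; 0, 0, 1, 0]

private lemma sp_aux (J A B : Matrix (Fin 4) (Fin 4) (ZMod 2))
    (ha : Aᵀ * J * A = J) (hone : A * B = 1) : Bᵀ * J * B = J := by
  have : Bᵀ * (Aᵀ * J * A) * B = (A * B)ᵀ * J * (A * B) := by
    simp only [Matrix.transpose_mul, Matrix.mul_assoc]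
  rw [ha] at this
  rw [this, hone]
  simp

/-- The symplectic group `Sp(4,𝔽₂)` as a subgroup of `GL(4,𝔽₂)`. -/
def Sp4F2 : Subgroup (GL (Fin 4) (ZMod 2)) where
  carrier := {X | (X : Matrix (Fin 4) (Fin 4) (ZMod 2))ᵀ * J8 * X = J8}
  one_mem' := by simp
  mul_mem' := by
    intro a b ha hb
    show ((a * b : GL (Fin 4) (ZMod 2)) :
        Matrix (Fin 4) (Fin 4) (ZMod 2))ᵀ * J8 * ((a * b : GL (Fin 4) (ZMod 2)) :
        Matrix (Fin 4) (Fin 4) (ZMod 2)) = J8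
    have : ((b : Matrix (Fin 4) (Fin 4) (ZMod 2))ᵀ *
        ((a : Matrix (Fin 4) (Fin 4) (ZMod 2))ᵀ * J8 * a)) * b = J8 := by
      rw [ha]; exact hb
    simpa only [Units.val_mul, Matrix.transpose_mul, Matrix.mul_assoc] using this
  inv_mem' := by
    intro a ha
    exact sp_aux J8 (a : Matrix (Fin 4) (Fin 4) (ZMod 2))
      ((a⁻¹ : GL (Fin 4) (ZMod 2)) : Matrix (Fin 4) (Fin 4) (ZMod 2)) ha
      (by rw [← Units.val_mul, mul_inv_cancel, Units.val_one])

-- pairing on column vectors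
def P2 (u v : Fin 4 → ZMod 2) : ZMod 2 := u 0 * v 1 + u 1 * v 0 + u 2 * v 3 + u 3 * v 2

lemma ENT (M : Matrix (Fin 4) (Fin 4) (ZMod 2)) (i j : Fin 4) :
    (Mᵀ * J8 * M) i j = P2 (fun k => M k i) (fun k => M k j) := by
  simp [Matrix.mul_apply, Fin.sum_univ_four, J8, P2, Matrix.transpose_apply,
    Matrix.cons_val_zero, Matrix.cons_val_one]
  ring

-- encoding of a column as a Nat < 16
def encC (u : Fin 4 → ZMod 2) : Nat :=
  (u 0).val + 2 * (u 1).val + 4 * (u 2).val + 8 * (u 3).val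

-- Bool pairing on codes
def bit (n i : Nat) : Bool := n.testBit i
def prB (a b : Nat) : Bool :=
  xor (xor (bit a 0 && bit b 1) (bit a 1 && bit b 0))
      (xor (bit a 2 && bit b 3) (bit a 3 && bit b 2))

lemma prB_enc (u v : Fin 4 → ZMod 2) : prB (encC u) (encC v) = decide (P2 u v = 1) := by
  revert u v; decide

lemma encC_lt (u : Fin 4 → ZMod 2) : encC u < 16 := by revert u; decide

def good : List (Nat × Nat × Nat × Nat) :=
  (List.range 16).flatMap fun a =>
  ((List.range 16).filter fun b => prB a b).flatMap fun b =>
  ((List.range 16).filter fun c => !prB a c && !prB b c).flatMap fun c =>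
  ((List.range 16).filter fun d => !prB a d && !prB b d && prB c d).map fun d => (a, b, c, d)

set_option maxRecDepth 100000 in
lemma good_length : good.length = 720 := by decide

def decC (t : Nat × Nat × Nat × Nat) : Matrix (Fin 4) (Fin 4) (ZMod 2) :=
  Matrix.of fun i j => if bit (![t.1, t.2.1, t.2.2.1, t.2.2.2] j) i.val then 1 else 0

def goodM : List (Matrix (Fin 4) (Fin 4) (ZMod 2)) := good.map decC

lemma dec_bit (u : Fin 4 → ZMod 2) (i : Fin 4) :
    (if bit (encC u) i.val then (1 : ZMod 2) else 0) = u i := by revert u i; decide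

lemma mem_goodM (M : Matrix (Fin 4) (Fin 4) (ZMod 2)) (h : Mᵀ * J8 * M = J8) : M ∈ goodM := by
  have col : ∀ j, Fin 4 → ZMod 2 := fun j k => M k j
  set c0 : Fin 4 → ZMod 2 := fun k => M k 0 with hc0
  set c1 : Fin 4 → ZMod 2 := fun k => M k 1 with hc1
  set c2 : Fin 4 → ZMod 2 := fun k => M k 2 with hc2
  set c3 : Fin 4 → ZMod 2 := fun k => M k 3 with hc3
  have hP : ∀ i j, P2 (fun k => M k i) (fun k => M k j) = J8 i j := by
    intro i j; rw [← ENT, h]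
  have e01 : prB (encC c0) (encC c1) = true := by
    rw [prB_enc]; simp [hP 0 1, J8, c0, c1]
  have e23 : prB (encC c2) (encC c3) = true := by
    rw [prB_enc]; simp [hP 2 3, J8, c2, c3]
  have e02 : prB (encC c0) (encC c2) = false := by
    rw [prB_enc]; simp [hP 0 2, J8, c0, c2]
  have e03 : prB (encC c0) (encC c3) = false := by
    rw [prB_enc]; simp [hP 0 3, J8, c0, c3]
  have e12 : prB (encC c1) (encC c2) = false := by
    rw [prB_enc]; simp [hP 1 2, J8, c1, c2]
  have e13 : prB (encC c1) (encC c3) = false := by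
    rw [prB_enc]; simp [hP 1 3, J8, c1, c3]
  have hvec : ∀ j : Fin 4, ![encC c0, encC c1, encC c2, encC c3] j = encC (fun k => M k j) := by
    intro j; fin_cases j <;> rfl
  have hdec : decC (encC c0, encC c1, encC c2, encC c3) = M := by
    ext i j
    simp only [decC, Matrix.of_apply]
    rw [hvec j, dec_bit]
  refine List.mem_map.mpr ⟨(encC c0, encC c1, encC c2, encC c3), ?_, hdec⟩
  refine List.mem_flatMap.mpr ⟨encC c0, List.mem_range.mpr (encC_lt c0), ?_⟩
  refine List.mem_flatMap.mpr ⟨encC c1, List.mem_filter.mpr ⟨List.mem_range.mpr (encC_lt c1), e01⟩, ?_⟩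
  refine List.mem_flatMap.mpr ⟨encC c2, List.mem_filter.mpr ⟨List.mem_range.mpr (encC_lt c2), by simp [e02, e12]⟩, ?_⟩
  exact List.mem_map.mpr ⟨encC c3, List.mem_filter.mpr ⟨List.mem_range.mpr (encC_lt c3), by simp [e03, e13, e23]⟩, rfl⟩

----------------- representation of S6 -----------------
def P6 : Matrix (Fin 6) (Fin 4) (ZMod 2) :=
  !![1,0,0,0; 1,1,0,0; 0,1,0,0; 0,0,1,0; 0,0,1,1; 0,0,0,1]
def Q4 : Matrix (Fin 4) (Fin 6) (ZMod 2) :=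
  !![0,1,1,0,0,0; 0,0,1,1,1,1; 0,0,0,0,1,1; 0,0,0,1,1,0]
def E6 : Matrix (Fin 6) (Fin 1) (ZMod 2) := Matrix.of fun _ _ => 1
def arow : Matrix (Fin 1) (Fin 6) (ZMod 2) := !![0,0,0,1,1,1]
def ucol : Matrix (Fin 6) (Fin 1) (ZMod 2) := !![1;0;0;0;0;0]

lemma QP : Q4 * P6 = 1 := by decide
lemma PQdec : P6 * Q4 = 1 + E6 * arow + ucol * E6ᵀ := by decide
lemma PtP : P6ᵀ * P6 = J8 := by decide
lemma EtP : E6ᵀ * P6 = 0 := by decide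
lemma QE : Q4 * E6 = 0 := by decide
lemma EtE : E6ᵀ * E6 = 0 := by decide
lemma PtE : P6ᵀ * E6 = 0 := by decide

def Mp (σ : Equiv.Perm (Fin 6)) : Matrix (Fin 6) (Fin 6) (ZMod 2) :=
  Matrix.of fun i j => if σ j = i then 1 else 0

lemma Mp_one : Mp 1 = 1 := by
  ext i j; simp [Mp, Matrix.one_apply, eq_comm]

lemma Mp_mul (σ τ : Equiv.Perm (Fin 6)) : Mp (σ * τ) = Mp σ * Mp τ := by
  ext i k
  simp only [Matrix.mul_apply, Mp, Matrix.of_apply, Equiv.Perm.mul_apply]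
  rw [Finset.sum_eq_single (τ k)]
  · rw [if_pos rfl, mul_one]; rfl
  · intro b _ hb; simp [Ne.symm hb]
  · simp

lemma Mp_transpose (σ : Equiv.Perm (Fin 6)) : (Mp σ)ᵀ = Mp σ⁻¹ := by
  ext i j
  simp only [Matrix.transpose_apply, Mp, Matrix.of_apply]
  congr 1
  simp [Equiv.Perm.inv_def, Equiv.eq_symm_apply, eq_comm]

lemma Mp_E (σ : Equiv.Perm (Fin 6)) : Mp σ * E6 = E6 := by
  ext i j
  simp only [Matrix.mul_apply, Mp, Matrix.of_apply, E6, mul_one]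
  rw [Finset.sum_eq_single (σ⁻¹ i)]
  · simp
  · intro b _ hb
    rw [if_neg]
    intro h; exact hb (by rw [← h]; simp)
  · simp

lemma Mp_orth (σ : Equiv.Perm (Fin 6)) : (Mp σ)ᵀ * Mp σ = 1 := by
  ext i j
  simp only [Matrix.mul_apply, Mp, Matrix.transpose_apply, Matrix.of_apply, ite_mul, one_mul,
    zero_mul, Matrix.one_apply]
  rw [Finset.sum_eq_single (σ i)]
  · simp [eq_comm]
  · intro b _ hb; simp [Ne.symm hb]
  · simp

-- derived helpers, right-assoc forms
lemma MpE' (σ : Equiv.Perm (Fin 6)) (Y : Matrix (Fin 1) (Fin 4) (ZMod 2)) :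
    Mp σ * (E6 * Y) = E6 * Y := by rw [← Matrix.mul_assoc, Mp_E]
lemma QE' (Y : Matrix (Fin 1) (Fin 4) (ZMod 2)) : Q4 * (E6 * Y) = 0 := by
  rw [← Matrix.mul_assoc, QE, Matrix.zero_mul]
lemma EtMp (σ : Equiv.Perm (Fin 6)) : E6ᵀ * Mp σ = E6ᵀ := by
  have := congrArg Matrix.transpose (Mp_E σ⁻¹)
  rwa [Matrix.transpose_mul, Mp_transpose, inv_inv] at this
lemma EtMpP (σ : Equiv.Perm (Fin 6)) : E6ᵀ * (Mp σ * P6) = 0 := by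
  rw [← Matrix.mul_assoc, EtMp, EtP]

def m (σ : Equiv.Perm (Fin 6)) : Matrix (Fin 4) (Fin 4) (ZMod 2) := Q4 * (Mp σ * P6)

lemma PQ_apply (Z : Matrix (Fin 6) (Fin 4) (ZMod 2)) :
    P6 * (Q4 * Z) = Z + E6 * (arow * Z) + ucol * (E6ᵀ * Z) := by
  rw [← Matrix.mul_assoc, PQdec]
  simp only [Matrix.add_mul, Matrix.one_mul, Matrix.mul_assoc]

lemma P_m (σ : Equiv.Perm (Fin 6)) :
    P6 * m σ = Mp σ * P6 + E6 * (arow * (Mp σ * P6)) := by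
  rw [m, PQ_apply, EtMpP, Matrix.mul_zero, add_zero]

lemma m_one : m 1 = 1 := by rw [m, Mp_one, Matrix.one_mul, QP]

lemma m_mul (σ τ : Equiv.Perm (Fin 6)) : m (σ * τ) = m σ * m τ := by
  have : m σ * m τ = Q4 * (Mp σ * (P6 * (Q4 * (Mp τ * P6)))) := by
    simp only [m, Matrix.mul_assoc]
  rw [this, PQ_apply, EtMpP, Matrix.mul_zero, add_zero, Matrix.mul_add, Matrix.mul_add,
    MpE', QE', add_zero, m, Mp_mul, Matrix.mul_assoc]

lemma m_symp (σ : Equiv.Perm (Fin 6)) : (m σ)ᵀ * J8 * m σ = J8 := by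
  have key : (P6 * m σ)ᵀ * (P6 * m σ) = J8 := by
    rw [P_m]
    set N := Mp σ * P6 with hN
    set R := arow * N with hR
    have h1 : Nᵀ * N = J8 := by
      rw [hN, Matrix.transpose_mul, Matrix.mul_assoc, ← Matrix.mul_assoc (Mp σ)ᵀ, Mp_orth,
        Matrix.one_mul, PtP]
    have h2 : Nᵀ * (E6 * R) = 0 := by
      rw [hN, Matrix.transpose_mul, Matrix.mul_assoc, Mp_transpose, MpE', ← Matrix.mul_assoc,
        PtE, Matrix.zero_mul]
    have h3 : (E6 * R)ᵀ * N = 0 := by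
      rw [Matrix.transpose_mul, Matrix.mul_assoc, hN, EtMpP, Matrix.mul_zero]
    have h4 : (E6 * R)ᵀ * (E6 * R) = 0 := by
      rw [Matrix.transpose_mul, Matrix.mul_assoc, ← Matrix.mul_assoc E6ᵀ, EtE,
        Matrix.zero_mul, Matrix.mul_zero]
    rw [Matrix.transpose_add, Matrix.add_mul, Matrix.mul_add, Matrix.mul_add, h1, h2, h3, h4]
    simp
  calc (m σ)ᵀ * J8 * m σ = (m σ)ᵀ * (P6ᵀ * P6) * m σ := by rw [PtP]
    _ = (P6 * m σ)ᵀ * (P6 * m σ) := by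
        rw [Matrix.transpose_mul]
        simp only [Matrix.mul_assoc]
    _ = J8 := key


----------------- the hom -----------------
def mUnit (σ : Equiv.Perm (Fin 6)) : GL (Fin 4) (ZMod 2) :=
  ⟨m σ, m σ⁻¹, by rw [← m_mul, mul_inv_cancel, m_one], by rw [← m_mul, inv_mul_cancel, m_one]⟩

def ψ : Equiv.Perm (Fin 6) →* Sp4F2 where
  toFun σ := ⟨mUnit σ, m_symp σ⟩
  map_one' := by
    apply Subtype.ext; apply Units.ext
    show m 1 = 1
    exact m_one
  map_mul' σ τ := by
    apply Subtype.ext; apply Units.ext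
    show m (σ * τ) = m σ * m τ
    exact m_mul σ τ

lemma MpP_apply (σ : Equiv.Perm (Fin 6)) (i : Fin 6) (j : Fin 4) :
    (Mp σ * P6) i j = P6 (σ⁻¹ i) j := by
  simp only [Matrix.mul_apply, Mp, Matrix.of_apply, ite_mul, one_mul, zero_mul]
  rw [Finset.sum_eq_single (σ⁻¹ i)]
  · simp
  · intro b _ hb
    rw [if_neg]
    intro h; exact hb (by rw [← h]; simp)
  · simp

lemma rkey : ∀ r : Matrix (Fin 1) (Fin 4) (ZMod 2),
    (∀ i : Fin 6, ∃ i' : Fin 6, ∀ j : Fin 4, P6 i' j + r 0 j = P6 i j) → r = 0 := by decide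

lemma rowinj : ∀ i i' : Fin 6, (∀ j : Fin 4, P6 i' j = P6 i j) → i' = i := by
  intro i i'; fin_cases i <;> fin_cases i' <;> decide

set_option maxHeartbeats 1000000 in
lemma ψ_inj : Function.Injective ψ := by
  rw [injective_iff_map_eq_one]
  intro σ hσ
  have h1 : m σ = 1 := congrArg (fun x : Sp4F2 => ((x : GL (Fin 4) (ZMod 2)) :
    Matrix (Fin 4) (Fin 4) (ZMod 2))) hσ
  have h2 : Mp σ * P6 + E6 * (arow * (Mp σ * P6)) = P6 := by
    rw [← P_m, h1, Matrix.mul_one]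
  set R := arow * (Mp σ * P6) with hR
  have h3 : ∀ i : Fin 6, ∀ j : Fin 4, P6 (σ⁻¹ i) j + R 0 j = P6 i j := by
    intro i j
    have := congrFun (congrFun h2 i) j
    rw [Matrix.add_apply, MpP_apply] at this
    simpa [Matrix.mul_apply, E6] using this
  have hR0 : R = 0 := rkey R (fun i => ⟨σ⁻¹ i, fun j => h3 i j⟩)
  have h4 : ∀ i, σ⁻¹ i = i := by
    intro i
    apply rowinj i
    intro j
    have := h3 i j
    rwa [hR0, Matrix.zero_apply, add_zero] at this
  ext i
  have h5 := h4 (σ i)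
  rw [show σ⁻¹ (σ i) = i from σ.symm_apply_apply i] at h5
  exact congrArg Fin.val h5.symm


/-- `Sp(4,𝔽₂)` is isomorphic to the symmetric group `S₆`. -/
theorem stmt_8 : Nonempty (Sp4F2 ≃* Equiv.Perm (Fin 6)) := by
  classical
  have hgood : goodM.length = 720 := by
    rw [goodM, List.length_map]; exact good_length
  -- injection Sp4F2 → goodM.toFinset
  have gmem : ∀ X : Sp4F2, ((X : GL (Fin 4) (ZMod 2)) :
      Matrix (Fin 4) (Fin 4) (ZMod 2)) ∈ goodM.toFinset := by
    intro X
    exact List.mem_toFinset.mpr (mem_goodM _ X.2)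
  let g : Sp4F2 → {x // x ∈ goodM.toFinset} := fun X => ⟨_, gmem X⟩
  have ginj : Function.Injective g := by
    intro X Y h
    apply Subtype.ext; apply Units.ext
    exact congrArg Subtype.val h
  have hle : Nat.card Sp4F2 ≤ 720 := by
    calc Nat.card Sp4F2 ≤ Nat.card {x // x ∈ goodM.toFinset} :=
          Nat.card_le_card_of_injective g ginj
      _ = goodM.toFinset.card := Nat.card_eq_finsetCard _
      _ ≤ goodM.length := goodM.toFinset_card_le
      _ = 720 := hgood
  have hperm : Nat.card (Equiv.Perm (Fin 6)) = 720 := by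
    simp [Nat.card_eq_fintype_card, Fintype.card_perm, Fintype.card_fin]
    rfl
  have hge : 720 ≤ Nat.card Sp4F2 := by
    rw [← hperm]
    exact Nat.card_le_card_of_injective ψ ψ_inj
  have hcard : Nat.card (Equiv.Perm (Fin 6)) = Nat.card Sp4F2 := by
    rw [hperm]; exact le_antisymm hge hle
  have hbij : Function.Bijective ψ :=
    (Nat.bijective_iff_injective_and_card ψ).mpr ⟨ψ_inj, hcard⟩
  exact ⟨(MulEquiv.ofBijective ψ hbij).symm⟩
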